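/- Let H be a real Hilbert space, t, s bilinear forms with ‖u‖² ≤ t(u,u) and s(u,v) ≤ ρ‖u‖‖v‖ for 0 ≤ ρ < 1, and R the preconditioned residual map as above. For the sequence u_k generated by the half-step t(u_{k+1/2}, v) = s(u_k, v) + ℓ(v) and residual-minimizing update u_{k+1} = u_{k+1/2} + c_k with c_k ∈ W minimizing ‖R(u_{k+1/2}+c)‖ over a subspace W containing 0, the residuals decay monotonically: ‖R(u_{k+1})‖ ≤ ρ‖R(u_k)‖ for all k ≥ 0. -/
import Mathlib


/-- Monotone residual decay (Theorem 5.1): for the accelerated source iteration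
with residual minimization over a subspace `W` (which contains `0`),
`‖R(u_{k+1})‖ ≤ ρ ‖R(u_k)‖`. -/
theorem accelerated_source_iteration_residual_decay
    {H : Type*} [NormedAddCommGroup H] [InnerProductSpace ℝ H] [CompleteSpace H]
    (t s : H →ₗ[ℝ] H →ₗ[ℝ] ℝ) (ρ : ℝ) (hρ0 : 0 ≤ ρ) (hρ1 : ρ < 1)
    (ht : ∀ u : H, ‖u‖ ^ 2 ≤ t u u)
    (hs : ∀ u v : H, s u v ≤ ρ * ‖u‖ * ‖v‖)
    (ℓ : H →ₗ[ℝ] ℝ)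
    (R : H → H)
    (hR : ∀ w v : H, t (R w) v = ℓ v - t w v + s w v)
    (W : Submodule ℝ H)
    (useq uhalf c : ℕ → H)
    (hhalf : ∀ k, ∀ v : H, t (uhalf k) v = s (useq k) v + ℓ v)
    (hcW : ∀ k, c k ∈ W)
    (hmin : ∀ k, ∀ c' ∈ W, ‖R (uhalf k + c k)‖ ≤ ‖R (uhalf k + c')‖)
    (hstep : ∀ k, useq (k + 1) = uhalf k + c k) :
    ∀ k, ‖R (useq (k + 1))‖ ≤ ρ * ‖R (useq k)‖ := by
  intro k
  -- Step 1: minimization with 0 ∈ W gives ‖R(u_{k+1})‖ ≤ ‖R(uhalf k)‖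
  have h1 : ‖R (useq (k + 1))‖ ≤ ‖R (uhalf k)‖ := by
    rw [hstep k]
    have := hmin k 0 (Submodule.zero_mem W)
    simpa using this
  -- Step 2: R(useq k) = uhalf k - useq k
  have hRu : R (useq k) = uhalf k - useq k := by
    have key : ∀ v : H, t (R (useq k) - (uhalf k - useq k)) v = 0 := by
      intro v
      have h2 := hR (useq k) v
      have h3 := hhalf k v
      simp only [map_sub, LinearMap.sub_apply]
      linarith
    have h4 := key (R (useq k) - (uhalf k - useq k))
    have h5 := ht (R (useq k) - (uhalf k - useq k))
    rw [h4] at h5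
    have h6 : ‖R (useq k) - (uhalf k - useq k)‖ = 0 := by nlinarith [norm_nonneg (R (useq k) - (uhalf k - useq k))]
    exact sub_eq_zero.mp (norm_eq_zero.mp h6)
  -- Step 3: t(R(uhalf k), v) = s(R(useq k), v)
  have hcontr : ∀ v : H, t (R (uhalf k)) v = s (R (useq k)) v := by
    intro v
    have h2 := hR (uhalf k) v
    have h3 := hhalf k v
    rw [hRu]
    simp only [map_sub, LinearMap.sub_apply]
    linarith
  -- Step 4: contraction
  have h7 : ‖R (uhalf k)‖ ^ 2 ≤ ρ * ‖R (useq k)‖ * ‖R (uhalf k)‖ := by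
    calc ‖R (uhalf k)‖ ^ 2 ≤ t (R (uhalf k)) (R (uhalf k)) := ht _
      _ = s (R (useq k)) (R (uhalf k)) := hcontr _
      _ ≤ ρ * ‖R (useq k)‖ * ‖R (uhalf k)‖ := hs _ _
  have h8 : ‖R (uhalf k)‖ ≤ ρ * ‖R (useq k)‖ := by
    rcases eq_or_lt_of_le (norm_nonneg (R (uhalf k))) with h | h
    · rw [← h]; positivity
    · nlinarith
  linarith
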